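/- Let p be a log-concave distribution on [n] (extended by zero outside), non-decreasing on [1,b], with a ≤ b, s = b−a+1, and let λ = p(b)/p(a) ≥ 1 (assuming p(a) > 0). Then for all 1 ≤ i ≤ b, p(i−s) ≤ (1/λ)·p(i). -/

import Mathlib

/-- Monotonicity chain: p is non-decreasing on [1,b]. -/
lemma monoChain_aux (b : ℤ) (p : ℤ → ℝ)
    (hmono : ∀ i, 1 ≤ i → i < b → p i ≤ p (i + 1)) :
    ∀ u v : ℤ, 1 ≤ u → u ≤ v → v ≤ b → p u ≤ p v := by
  intro u v h1u huv
  refine Int.le_induction (m := u) (motive := fun v _ => v ≤ b → p u ≤ p v)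
    (fun _ => le_rfl) (fun w hw ih hwb => ?_) v huv
  exact le_trans (ih (by omega)) (hmono w (by omega) (by omega))

/-- One-step cross inequality from log-concavity. -/
lemma oneStep_aux (b : ℤ) (p : ℤ → ℝ)
    (hp0 : ∀ i, 0 ≤ p i)
    (hmono : ∀ i, 1 ≤ i → i < b → p i ≤ p (i + 1))
    (hlc : ∀ k ≤ b, p (k - 1) * p (k + 1) ≤ p k ^ 2)
    (u : ℤ) (h1u : 1 ≤ u) :
    ∀ x : ℤ, u + 2 ≤ x → x ≤ b → p u * p x ≤ p (u + 1) * p (x - 1) := by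
  intro x hx
  refine Int.le_induction (m := u + 2)
    (motive := fun x _ => x ≤ b → p u * p x ≤ p (u + 1) * p (x - 1)) ?_ ?_ x hx
  · intro hb
    have h := hlc (u + 1) (by omega)
    have e1 : u + 1 - 1 = u := by ring
    have e2 : u + 2 - 1 = u + 1 := by ring
    have e3 : u + 1 + 1 = u + 2 := by ring
    rw [e1, e3] at h
    rw [e2]
    nlinarith [h]
  · intro x hx ih hxb
    have hxb' : x ≤ b := by omega
    have ihx := ih hxb'
    have hmc := monoChain_aux b p hmono
    by_cases hzx : p x = 0
    · have hu0 : p u = 0 := le_antisymm (hzx ▸ hmc u x h1u (by omega) hxb') (hp0 u)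
      rw [hu0]
      simpa using mul_nonneg (hp0 _) (hp0 _)
    by_cases hzx1 : p (x - 1) = 0
    · have hu0 : p u = 0 :=
        le_antisymm (hzx1 ▸ hmc u (x - 1) h1u (by omega) (by omega)) (hp0 u)
      rw [hu0]
      simpa using mul_nonneg (hp0 _) (hp0 _)
    have hpx : 0 < p x := lt_of_le_of_ne (hp0 x) (Ne.symm hzx)
    have hpx1 : 0 < p (x - 1) := lt_of_le_of_ne (hp0 _) (Ne.symm hzx1)
    have hlcx := hlc x hxb'
    have hpos : 0 < p x * p (x - 1) := mul_pos hpx hpx1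
    have key : (p u * p (x + 1)) * (p x * p (x - 1)) ≤
        (p (u + 1) * p x) * (p x * p (x - 1)) := by
      calc (p u * p (x + 1)) * (p x * p (x - 1))
          = (p u * p x) * (p (x - 1) * p (x + 1)) := by ring
        _ ≤ (p (u + 1) * p (x - 1)) * (p x ^ 2) :=
            mul_le_mul ihx hlcx (mul_nonneg (hp0 _) (hp0 _))
              (mul_nonneg (hp0 _) (hp0 _))
        _ = (p (u + 1) * p x) * (p x * p (x - 1)) := by ring
    have e : x + 1 - 1 = x := by ring
    rw [e]
    exact le_of_mul_le_mul_right key hpos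

/-- Chained cross inequality. -/
lemma cross_aux (b : ℤ) (p : ℤ → ℝ)
    (hp0 : ∀ i, 0 ≤ p i)
    (hmono : ∀ i, 1 ≤ i → i < b → p i ≤ p (i + 1))
    (hlc : ∀ k ≤ b, p (k - 1) * p (k + 1) ≤ p k ^ 2) :
    ∀ k : ℕ, ∀ u x : ℤ, 1 ≤ u → u + k ≤ x - k → x ≤ b →
      p u * p x ≤ p (u + k) * p (x - k) := by
  intro k
  induction k with
  | zero => intro u x _ _ _; simp
  | succ k ih =>
    intro u x h1u hk hxb
    have hk' : (k : ℤ) + 1 = ((k + 1 : ℕ) : ℤ) := by push_cast; ring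
    have step : p u * p x ≤ p (u + 1) * p (x - 1) :=
      oneStep_aux b p hp0 hmono hlc u h1u x (by push_cast at hk ⊢; omega) hxb
    have ih' : p (u + 1) * p (x - 1) ≤ p (u + 1 + k) * p (x - 1 - k) :=
      ih (u + 1) (x - 1) (by omega) (by push_cast at hk ⊢; omega) (by omega)
    have e1 : u + 1 + (k : ℤ) = u + ((k + 1 : ℕ) : ℤ) := by push_cast; ring
    have e2 : x - 1 - (k : ℤ) = x - ((k + 1 : ℕ) : ℤ) := by push_cast; ring
    rw [e1, e2] at ih'
    exact le_trans step ih'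

/-- for a non-decreasing log-concave distribution on [1,b] (extended by 0),
with s = b−a+1 and λ = p(b)/p(a) ≥ 1, one has p(i−s) ≤ (1/λ)·p(i) for all 1 ≤ i ≤ b. -/
theorem logconcave_geometric_decay (n a b : ℤ) (p : ℤ → ℝ)
    (h1a : 1 ≤ a) (hab : a ≤ b) (hbn : b ≤ n)
    (hp0 : ∀ i, 0 ≤ p i)
    (hzero : ∀ i ≤ (0 : ℤ), p i = 0)
    (hmono : ∀ i, 1 ≤ i → i < b → p i ≤ p (i + 1))
    (hlc : ∀ k ≤ b, p (k - 1) * p (k + 1) ≤ p k ^ 2)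
    (hpa : 0 < p a)
    (hlam : 1 ≤ p b / p a) :
    ∀ i, 1 ≤ i → i ≤ b → p (i - (b - a + 1)) ≤ (p a / p b) * p i := by
  intro i h1i hib
  have hpab : p a ≤ p b := (one_le_div hpa).mp hlam
  have hpb : 0 < p b := lt_of_lt_of_le hpa hpab
  set u := i - (b - a + 1) with hu
  by_cases hu0 : u ≤ 0
  · rw [hzero u hu0]
    exact mul_nonneg (div_nonneg (hp0 a) (hp0 b)) (hp0 i)
  push_neg at hu0
  have h1u : 1 ≤ u := hu0
  -- i ≥ 2 since u ≥ 1 and b - a + 1 ≥ 1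
  have h2i : 2 ≤ i := by omega
  rw [div_mul_eq_mul_div, le_div_iff₀ hpb]
  -- goal : p u * p b ≤ p a * p i
  have hmain : p u * p b ≤ p a * p (i - 1) := by
    rcases le_or_gt a (i - 1) with hcase | hcase
    · have hk : ((a - u).toNat : ℤ) = a - u := Int.toNat_of_nonneg (by omega)
      have h := cross_aux b p hp0 hmono hlc (a - u).toNat u b h1u
        (by rw [hk]; omega) le_rfl
      rw [hk] at h
      have e1 : u + (a - u) = a := by ring
      have e2 : b - (a - u) = i - 1 := by omega
      rw [e1, e2] at h
      exact h
    · have hk : ((i - 1 - u).toNat : ℤ) = i - 1 - u := Int.toNat_of_nonneg (by omega)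
      have h := cross_aux b p hp0 hmono hlc (i - 1 - u).toNat u b h1u
        (by rw [hk]; omega) le_rfl
      rw [hk] at h
      have e1 : u + (i - 1 - u) = i - 1 := by ring
      have e2 : b - (i - 1 - u) = a := by omega
      rw [e1, e2] at h
      linarith [h]
  have hstep : p (i - 1) ≤ p i := by
    have := hmono (i - 1) (by omega) (by omega)
    simpa using this
  calc p u * p b ≤ p a * p (i - 1) := hmain
    _ ≤ p a * p i := mul_le_mul_of_nonneg_left hstep (hp0 a)
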